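/- Let (α, v) be a cocycle crossed action of a group G on a group U, H ⊴ G a normal subgroup, s : G/H → G a section with s(ē) = e, m(p,q) := s(pq)⁻¹ s(p) s(q), and c(p,q) := v(s(p), s(q)) · v(s(pq), m(p,q))⁻¹. Then (without assuming v trivial on H) for all p, q, r ∈ G/H one has: c(p,q) · α_{s(pq)}( δv(s(r), m(p,q))⁻¹ ) · c(pq,r) · α_{s(pqr)}( v(m(pq,r), s(r)⁻¹ m(p,q) s(r)) ) = α_{s(p)}( c(q,r) ) · c(p, qr) · α_{s(pqr)}( v(m(p,qr), m(q,r)) ), where δv(g,n) = v(g,g⁻¹ng) v(n,g)⁻¹. -/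
import Mathlib


/-- The general (no triviality of `v` on `H`) 2-cocycle-type identity:
`c(p,q)·α_{s(pq)}(δv(s(r),m(p,q))⁻¹)·c(pq,r)·α_{s(pqr)}(v(m(pq,r), s(r)⁻¹m(p,q)s(r)))
  = α_{s(p)}(c(q,r))·c(p,qr)·α_{s(pqr)}(v(m(p,qr), m(q,r)))`. -/
theorem stmt5 {G U : Type*} [Group G] [Group U]
    (α : G → MulAut U) (v : G → G → U)
    (hα1 : α 1 = 1)
    (hv1 : ∀ h : G, v 1 h = 1) (hv2 : ∀ g : G, v g 1 = 1)
    (hAd : ∀ g h : G, ∀ x : U, α g (α h x) = v g h * α (g * h) x * (v g h)⁻¹)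
    (hcoc : ∀ g h k : G, v g h * v (g * h) k = α g (v h k) * v g (h * k))
    (H : Subgroup G) [H.Normal]
    (s : G ⧸ H → G)
    (hs : ∀ p : G ⧸ H, (QuotientGroup.mk (s p) : G ⧸ H) = p)
    (hse : s 1 = 1)
    (m : G ⧸ H → G ⧸ H → G)
    (hm : ∀ p q : G ⧸ H, m p q = (s (p * q))⁻¹ * s p * s q)
    (c : G ⧸ H → G ⧸ H → U)
    (hc : ∀ p q : G ⧸ H, c p q = v (s p) (s q) * (v (s (p * q)) (m p q))⁻¹)
    (δv : G → G → U)
    (hδ : ∀ g n : G, δv g n = v g (g⁻¹ * n * g) * (v n g)⁻¹) :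
    ∀ p q r : G ⧸ H,
      c p q * α (s (p * q)) ((δv (s r) (m p q))⁻¹) * c (p * q) r *
          α (s (p * q * r)) (v (m (p * q) r) ((s r)⁻¹ * m p q * s r)) =
        α (s p) (c q r) * c p (q * r) *
          α (s (p * q * r)) (v (m p (q * r)) (m q r)) := by
  have hv' : ∀ g h k : G, α g (v h k) = v g h * v (g * h) k * (v g (h * k))⁻¹ := by
    intro g h k
    rw [eq_mul_inv_iff_mul_eq, ← hcoc]
  intro p q r
  simp only [hc, hδ, hm, map_mul, map_inv, mul_inv_rev, inv_inv, hv']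
  simp [mul_assoc, mul_inv_rev]
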